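/- Let m ∈ ℕ, N ≥ 1, and let α_{j,s} ∈ ℝ for j = 0,…,N and s = 0,…,M_j. Let b : ℕ → ℝ be a sequence such that the formal power series z(t) = Σ_{k≥0} b_k t^k satisfies z^{(m)}(t) = Σ_{j=1}^{N} a_j(t) · z(t)^j + a_0(t), where a_j(t) = Σ_{s=0}^{M_j} α_{j,s} t^s; equivalently, for every k ∈ ℕ: ((k+m)!/k!) · b_{k+m} = Σ_{j=1}^{N} Σ_{s=0}^{min(M_j,k)} α_{j,s} · Σ_{i_1+…+i_j = k−s} b_{i_1}⋯b_{i_j} + α_{0,k} (with α_{0,k} := 0 for k > M_0). Define z : ℕ → ℝ by z(n) = Σ_{k=0}^{n} b_k · n!/(n−k)!. Then for every n ∈ ℕ: (Δ^m z)(n) = n! · Σ_{j=1}^{N} Σ_{s=0}^{min(M_j,n)} α_{j,s} · Σ_{(k_1,…,k_j) ∈ ℕ^j, k_1+…+k_j ≤ n−s} ( (−1)^{k_1+…+k_j+(n−s)} / (k_1!⋯k_j!) ) · ( (j−1)^{(n−s)−(k_1+…+k_j)} / ((n−s)−(k_1+…+k_j))! ) · z(k_1)⋯z(k_j) + Σ_{r=0}^{min(M_0,n)}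 α_{0,r} · n!/(n−r)!, with the convention 0^0 = 1. -/

import Mathlib

/-- The forward difference operator acting on sequences. -/
def fwdDiffSeq (u : ℕ → ℝ) : ℕ → ℝ := fun n => u (n + 1) - u n


lemma descFac_step (n k : ℕ) : ((n+1).descFactorial (k+1) : ℕ) = n.descFactorial (k+1) + (k+1) * n.descFactorial k := by
  rcases le_or_gt k n with h | h
  · rw [Nat.succ_descFactorial_succ, Nat.descFactorial_succ]
    have : n + 1 = (n - k) + (k + 1) := by omega
    rw [this, add_mul]
  · rw [Nat.descFactorial_eq_zero_iff_lt.2 h, Nat.descFactorial_eq_zero_iff_lt.2 (by omega),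
      Nat.descFactorial_eq_zero_iff_lt.2 (by omega)]
    simp

lemma sum_adt_succ {R : Type*} [AddCommMonoid R] (j q : ℕ) (f : (Fin (j+1) → ℕ) → R) :
    ∑ x ∈ Finset.Nat.antidiagonalTuple (j+1) q, f x
      = ∑ p ∈ Finset.HasAntidiagonal.antidiagonal q, ∑ y ∈ Finset.Nat.antidiagonalTuple j p.2, f (Fin.cons p.1 y) := by
  rw [← Finset.sum_sigma (Finset.HasAntidiagonal.antidiagonal q) (fun p => Finset.Nat.antidiagonalTuple j p.2)
    (fun x => f (Fin.cons x.1.1 x.2))]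
  refine Finset.sum_nbij' (fun x => ⟨(x 0, ∑ i, Fin.tail x i), Fin.tail x⟩)
    (fun p => (Fin.cons p.1.1 p.2 : Fin (j+1) → ℕ)) ?_ ?_ ?_ ?_ ?_
  · intro x hx
    rw [Finset.Nat.mem_antidiagonalTuple] at hx
    simp only [Finset.mem_sigma, Finset.HasAntidiagonal.mem_antidiagonal, Finset.Nat.mem_antidiagonalTuple]
    refine ⟨?_, trivial⟩
    rw [← hx, Fin.sum_univ_succ]; rfl
  · intro p hp
    simp only [Finset.mem_sigma, Finset.HasAntidiagonal.mem_antidiagonal, Finset.Nat.mem_antidiagonalTuple] at hp ⊢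
    rw [Fin.sum_univ_succ, Fin.cons_zero]
    simp only [Fin.cons_succ]
    rw [show (∑ i : Fin j, p.2 i) = p.1.2 from hp.2, hp.1]
  · intro x hx
    exact Fin.cons_self_tail x
  · intro p hp
    simp only [Finset.mem_sigma, Finset.HasAntidiagonal.mem_antidiagonal, Finset.Nat.mem_antidiagonalTuple] at hp
    have ht : Fin.tail (Fin.cons p.1.1 p.2 : Fin (j+1) → ℕ) = p.2 :=
      Fin.tail_cons (α := fun _ : Fin (j+1) => ℕ) p.1.1 p.2
    refine Sigma.ext ?_ ?_
    · dsimp only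
      rw [ht]
      simp [Fin.cons_zero, hp.2]
    · dsimp only
      rw [ht]
  · intro x hx
    dsimp only
    rw [Fin.cons_self_tail]

lemma coeff_mk_pow (b : ℕ → ℝ) : ∀ (j q : ℕ),
    PowerSeries.coeff q ((PowerSeries.mk b)^j)
      = ∑ i ∈ Finset.Nat.antidiagonalTuple j q, ∏ t : Fin j, b (i t) := by
  intro j
  induction j with
  | zero =>
    intro q
    cases q with
    | zero => simp
    | succ q => simp
  | succ j ih =>
    intro q
    rw [pow_succ', PowerSeries.coeff_mul, sum_adt_succ j q (fun x => ∏ t : Fin (j+1), b (x t))]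
    rw [Finset.Nat.sum_antidiagonal_eq_sum_range_succ_mk,
      Finset.Nat.sum_antidiagonal_eq_sum_range_succ_mk]
    apply Finset.sum_congr rfl
    intro p hp
    rw [PowerSeries.coeff_mk, ih, Finset.mul_sum]
    apply Finset.sum_congr rfl
    intro y hy
    rw [Fin.prod_univ_succ, Fin.cons_zero]
    simp [Fin.cons_succ]


lemma coeff_exp_real (n : ℕ) : PowerSeries.coeff n (PowerSeries.exp ℝ) = ((n.factorial : ℝ))⁻¹ := by
  rw [PowerSeries.coeff_exp]
  rw [eq_ratCast (algebraMap ℚ ℝ) (1 / n.factorial)]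
  push_cast
  rw [one_div]

lemma mkc_eq (b z : ℕ → ℝ)
    (hz : ∀ n : ℕ, z n = ∑ k ∈ Finset.range (n + 1), b k * (Nat.descFactorial n k : ℝ)) :
    PowerSeries.mk (fun n => z n / n.factorial) = PowerSeries.mk b * PowerSeries.exp ℝ := by
  ext n
  rw [PowerSeries.coeff_mk, PowerSeries.coeff_mul,
    Finset.Nat.sum_antidiagonal_eq_sum_range_succ_mk, hz, Finset.sum_div]
  apply Finset.sum_congr rfl
  intro k hk
  rw [Finset.mem_range] at hk
  rw [PowerSeries.coeff_mk, coeff_exp_real]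
  have hfac : ((n - k).factorial * (Nat.descFactorial n k) : ℝ) = (n.factorial : ℝ) := by
    rw [← Nat.cast_mul, Nat.factorial_mul_descFactorial (by omega)]
  have h1 : (n.factorial : ℝ) ≠ 0 := Nat.cast_ne_zero.2 (Nat.factorial_ne_zero n)
  have h2 : ((n - k).factorial : ℝ) ≠ 0 := Nat.cast_ne_zero.2 (Nat.factorial_ne_zero _)
  field_simp
  rw [mul_assoc, mul_comm ((n.descFactorial k : ℕ) : ℝ) _, hfac]

lemma series_key (b c : ℕ → ℝ)
    (hC : PowerSeries.mk c = PowerSeries.mk b * PowerSeries.exp ℝ) {j : ℕ} (hj : 1 ≤ j) :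
    (PowerSeries.mk b)^j * PowerSeries.exp ℝ
      = (PowerSeries.mk c)^j * PowerSeries.rescale (-(((j - 1 : ℕ)) : ℝ)) (PowerSeries.exp ℝ) := by
  rw [hC, mul_pow, PowerSeries.exp_pow_eq_rescale_exp, mul_assoc,
    PowerSeries.exp_mul_exp_eq_exp_add]
  have : (j : ℝ) + (-(((j - 1 : ℕ)) : ℝ)) = 1 := by
    rw [Nat.cast_sub hj]; push_cast; ring
  rw [this, PowerSeries.rescale_one, RingHom.id_apply]

lemma iter_fd (b z : ℕ → ℝ)
    (hz : ∀ n : ℕ, z n = ∑ k ∈ Finset.range (n + 1), b k * (Nat.descFactorial n k : ℝ)) :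
    ∀ (m n : ℕ), (fwdDiffSeq^[m] z) n
      = ∑ k ∈ Finset.range (n+1), ((k+m).descFactorial m : ℝ) * b (k+m) * (Nat.descFactorial n k : ℝ) := by
  intro m
  induction m with
  | zero =>
    intro n
    simp only [Function.iterate_zero, id_eq, Nat.add_zero, Nat.descFactorial_zero, Nat.cast_one,
      one_mul]
    exact hz n
  | succ m ih =>
    intro n
    rw [Function.iterate_succ_apply']
    show (fwdDiffSeq^[m] z) (n+1) - (fwdDiffSeq^[m] z) n = _
    rw [ih (n+1), ih n]
    have hd0 : Nat.descFactorial n (n+1) = 0 :=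
      Nat.descFactorial_eq_zero_iff_lt.2 (Nat.lt_succ_self n)
    have hext : ∑ k ∈ Finset.range (n+2), ((k+m).descFactorial m : ℝ) * b (k+m) * (Nat.descFactorial n k : ℝ)
        = ∑ k ∈ Finset.range (n+1), ((k+m).descFactorial m : ℝ) * b (k+m) * (Nat.descFactorial n k : ℝ) := by
      rw [Finset.sum_range_succ, show n + 1 = n + 1 from rfl, hd0]
      simp
    rw [← hext, show n + 1 + 1 = n + 2 from rfl, ← Finset.sum_sub_distrib]
    rw [Finset.sum_range_succ']
    have h0 : ((0+m).descFactorial m : ℝ) * b (0+m) * (Nat.descFactorial (n+1) 0 : ℝ)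
        - ((0+m).descFactorial m : ℝ) * b (0+m) * (Nat.descFactorial n 0 : ℝ) = 0 := by
      simp
    rw [h0, add_zero]
    apply Finset.sum_congr rfl
    intro k hk
    have hstep : ((Nat.descFactorial (n+1) (k+1) : ℕ) : ℝ)
        = (Nat.descFactorial n (k+1) : ℝ) + (k+1) * (Nat.descFactorial n k : ℝ) := by
      rw [descFac_step]; push_cast; ring
    have hdf : ((k + (m+1)).descFactorial (m+1) : ℕ) = (k+1) * ((k+1+m).descFactorial m) := by
      have h1 : k + (m+1) = (k + 1 + m) := by omega
      rw [h1, Nat.descFactorial_succ]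
      congr 1
      omega
    rw [hstep, hdf]
    push_cast
    ring

lemma inner_key (b z : ℕ → ℝ)
    (hz : ∀ n : ℕ, z n = ∑ k ∈ Finset.range (n + 1), b k * (Nat.descFactorial n k : ℝ))
    (j ν : ℕ) (hj : 1 ≤ j) :
    ∑ q ∈ Finset.range (ν+1),
        (∑ i ∈ Finset.Nat.antidiagonalTuple j q, ∏ t : Fin j, b (i t)) * (((ν-q).factorial : ℝ))⁻¹
    = ∑ t ∈ Finset.range (ν+1), ∑ k ∈ Finset.Nat.antidiagonalTuple j t,
        ((-1:ℝ)^(t+ν) / ∏ i : Fin j, ((k i).factorial : ℝ)) *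
          ((((j-1:ℕ)):ℝ)^(ν-t) / (((ν-t).factorial : ℝ))) * ∏ i : Fin j, z (k i) := by
  set c : ℕ → ℝ := fun n => z n / n.factorial with hc
  have hL : ∑ q ∈ Finset.range (ν+1),
      (∑ i ∈ Finset.Nat.antidiagonalTuple j q, ∏ t : Fin j, b (i t)) * (((ν-q).factorial : ℝ))⁻¹
      = PowerSeries.coeff ν ((PowerSeries.mk b)^j * PowerSeries.exp ℝ) := by
    rw [PowerSeries.coeff_mul, Finset.Nat.sum_antidiagonal_eq_sum_range_succ_mk]
    apply Finset.sum_congr rfl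
    intro q hq
    rw [coeff_mk_pow, coeff_exp_real]
  have hR : PowerSeries.coeff ν
      ((PowerSeries.mk c)^j * PowerSeries.rescale (-(((j - 1 : ℕ)) : ℝ)) (PowerSeries.exp ℝ))
      = ∑ t ∈ Finset.range (ν+1), ∑ k ∈ Finset.Nat.antidiagonalTuple j t,
        ((-1:ℝ)^(t+ν) / ∏ i : Fin j, ((k i).factorial : ℝ)) *
          ((((j-1:ℕ)):ℝ)^(ν-t) / (((ν-t).factorial : ℝ))) * ∏ i : Fin j, z (k i) := by
    rw [PowerSeries.coeff_mul, Finset.Nat.sum_antidiagonal_eq_sum_range_succ_mk]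
    apply Finset.sum_congr rfl
    intro t ht
    rw [Finset.mem_range] at ht
    rw [coeff_mk_pow, PowerSeries.coeff_rescale, coeff_exp_real, Finset.sum_mul]
    apply Finset.sum_congr rfl
    intro k hk
    have hsgn : ((-1:ℝ))^(t+ν) = (-1:ℝ)^(ν-t) := by
      have h : t + ν = (ν - t) + 2*t := by omega
      rw [h, pow_add, pow_mul]
      simp
    have hprod : (∏ i : Fin j, c (k i)) =
        (∏ i : Fin j, z (k i)) / (∏ i : Fin j, ((k i).factorial : ℝ)) := by
      rw [← Finset.prod_div_distrib]
    have hfacne : (∏ i : Fin j, ((k i).factorial : ℝ)) ≠ 0 :=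
      Finset.prod_ne_zero_iff.2 (fun i _ => Nat.cast_ne_zero.2 (Nat.factorial_ne_zero _))
    rw [hprod, hsgn, neg_pow]
    field_simp
  rw [hL, series_key b c (mkc_eq b z hz) hj, hR]

/-- Discretization of a nonlinear ODE with polynomial coefficients: the Taylor
coefficients of a formal power series solution yield an exact solution of the
associated nonlocal difference equation on the integer lattice. -/
theorem nonlinear_ode_discretization
    (m N : ℕ) (hN : 1 ≤ N) (M : ℕ → ℕ) (α : ℕ → ℕ → ℝ) (b : ℕ → ℝ)
    (hode : ∀ k : ℕ,
      (Nat.descFactorial (k + m) m : ℝ) * b (k + m) =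
        (∑ j ∈ Finset.Icc 1 N, ∑ s ∈ Finset.range (min (M j) k + 1), α j s *
          ∑ i ∈ Finset.Nat.antidiagonalTuple j (k - s), ∏ t : Fin j, b (i t))
        + (if k ≤ M 0 then α 0 k else 0))
    (z : ℕ → ℝ)
    (hz : ∀ n : ℕ, z n = ∑ k ∈ Finset.range (n + 1), b k * (Nat.descFactorial n k : ℝ)) :
    ∀ n : ℕ,
      (fwdDiffSeq^[m] z) n =
        (Nat.factorial n : ℝ) *
          (∑ j ∈ Finset.Icc 1 N, ∑ s ∈ Finset.range (min (M j) n + 1), α j s *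
            ∑ t ∈ Finset.range (n - s + 1), ∑ k ∈ Finset.Nat.antidiagonalTuple j t,
              ((-1 : ℝ) ^ (t + (n - s)) / ∏ i : Fin j, (Nat.factorial (k i) : ℝ)) *
                (((j - 1 : ℕ) : ℝ) ^ ((n - s) - t) / (Nat.factorial ((n - s) - t) : ℝ)) *
                ∏ i : Fin j, z (k i))
        + ∑ r ∈ Finset.range (min (M 0) n + 1), α 0 r * (Nat.descFactorial n r : ℝ) := by
  intro n
  rw [iter_fd b z hz m n]
  -- abbreviations
  set P : ℕ → ℕ → ℝ :=
    fun j q => ∑ i ∈ Finset.Nat.antidiagonalTuple j q, ∏ t : Fin j, b (i t) with hP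
  have step1 : ∑ k ∈ Finset.range (n+1),
      ((k+m).descFactorial m : ℝ) * b (k+m) * (Nat.descFactorial n k : ℝ)
      = (∑ k ∈ Finset.range (n+1), (∑ j ∈ Finset.Icc 1 N,
          ∑ s ∈ Finset.range (min (M j) k + 1), α j s * P j (k-s)) * (Nat.descFactorial n k : ℝ))
        + ∑ k ∈ Finset.range (n+1),
            (if k ≤ M 0 then α 0 k else 0) * (Nat.descFactorial n k : ℝ) := by
    rw [← Finset.sum_add_distrib]
    apply Finset.sum_congr rfl
    intro k _
    rw [hode k, add_mul]
  rw [step1]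
  -- the alpha_0 part
  have hA0 : ∑ k ∈ Finset.range (n+1), (if k ≤ M 0 then α 0 k else 0) * (Nat.descFactorial n k : ℝ)
      = ∑ r ∈ Finset.range (min (M 0) n + 1), α 0 r * (Nat.descFactorial n r : ℝ) := by
    have hsub : Finset.range (min (M 0) n + 1) ⊆ Finset.range (n+1) := by
      apply Finset.range_subset_range.2; omega
    rw [← Finset.sum_subset hsub (by
      intro k hk hk2
      rw [Finset.mem_range] at hk hk2
      rw [if_neg (by omega), zero_mul])]
    apply Finset.sum_congr rfl
    intro k hk
    rw [Finset.mem_range] at hk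
    rw [if_pos (by omega)]
  rw [hA0]
  congr 1
  -- the nonlinear part
  -- push D into the j-sum and the s-sum, then swap k with j
  have step2 : ∑ k ∈ Finset.range (n+1), (∑ j ∈ Finset.Icc 1 N,
        ∑ s ∈ Finset.range (min (M j) k + 1), α j s * P j (k-s)) * (Nat.descFactorial n k : ℝ)
      = ∑ j ∈ Finset.Icc 1 N, ∑ k ∈ Finset.range (n+1),
          ∑ s ∈ Finset.range (min (M j) k + 1),
            α j s * P j (k-s) * (Nat.descFactorial n k : ℝ) := by
    rw [Finset.sum_comm]
    apply Finset.sum_congr rfl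
    intro k _
    rw [Finset.sum_mul]
    apply Finset.sum_congr rfl
    intro j _
    rw [Finset.sum_mul]
  rw [step2, Finset.mul_sum]
  apply Finset.sum_congr rfl
  intro j hj
  rw [Finset.mem_Icc] at hj
  -- for fixed j : swap k,s and reindex
  have step3 : ∑ k ∈ Finset.range (n+1), ∑ s ∈ Finset.range (min (M j) k + 1),
        α j s * P j (k-s) * (Nat.descFactorial n k : ℝ)
      = ∑ s ∈ Finset.range (min (M j) n + 1), ∑ q ∈ Finset.range (n - s + 1),
          α j s * P j q * (Nat.descFactorial n (s+q) : ℝ) := by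
    have e1 : ∀ k ∈ Finset.range (n+1),
        ∑ s ∈ Finset.range (min (M j) k + 1), α j s * P j (k-s) * (Nat.descFactorial n k : ℝ)
        = ∑ s ∈ Finset.range (n+1), (if s ≤ M j ∧ s ≤ k then
            α j s * P j (k-s) * (Nat.descFactorial n k : ℝ) else 0) := by
      intro k hk
      rw [Finset.mem_range] at hk
      have hsub : Finset.range (min (M j) k + 1) ⊆ Finset.range (n+1) := by
        apply Finset.range_subset_range.2; omega
      rw [← Finset.sum_subset hsub (by
        intro s hs hs2
        rw [Finset.mem_range] at hs hs2
        rw [if_neg (by omega)])]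
      apply Finset.sum_congr rfl
      intro s hs
      rw [Finset.mem_range] at hs
      rw [if_pos (by omega)]
    rw [Finset.sum_congr rfl e1, Finset.sum_comm]
    have hsub2 : Finset.range (min (M j) n + 1) ⊆ Finset.range (n+1) := by
      apply Finset.range_subset_range.2; omega
    rw [← Finset.sum_subset hsub2 (by
      intro s hs hs2
      rw [Finset.mem_range] at hs hs2
      apply Finset.sum_eq_zero
      intro k hk
      rw [Finset.mem_range] at hk
      rw [if_neg (by omega)])]
    apply Finset.sum_congr rfl
    intro s hs
    rw [Finset.mem_range] at hs
    -- inner: sum over k in range (n+1) of ite (s ≤ k)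
    have e2 : ∑ k ∈ Finset.range (n+1), (if s ≤ M j ∧ s ≤ k then
          α j s * P j (k-s) * (Nat.descFactorial n k : ℝ) else 0)
        = ∑ k ∈ Finset.Ico s (n+1),
            α j s * P j (k-s) * (Nat.descFactorial n k : ℝ) := by
      rw [Finset.range_eq_Ico, ← Finset.sum_Ico_consecutive _ (Nat.zero_le s) (by omega : s ≤ n+1)]
      have hz1 : ∑ k ∈ Finset.Ico 0 s, (if s ≤ M j ∧ s ≤ k then
          α j s * P j (k-s) * (Nat.descFactorial n k : ℝ) else 0) = 0 := by
        apply Finset.sum_eq_zero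
        intro k hk
        rw [Finset.mem_Ico] at hk
        rw [if_neg (by omega)]
      rw [hz1, zero_add]
      apply Finset.sum_congr rfl
      intro k hk
      rw [Finset.mem_Ico] at hk
      rw [if_pos (by omega)]
    rw [e2, Finset.sum_Ico_eq_sum_range]
    have hrange : n + 1 - s = n - s + 1 := by omega
    rw [hrange]
    apply Finset.sum_congr rfl
    intro q hq
    have : s + q - s = q := by omega
    rw [this]
  rw [step3, Finset.mul_sum]
  apply Finset.sum_congr rfl
  intro s hs
  rw [Finset.mem_range] at hs
  have hsn : s ≤ n := by omega
  -- per (j,s): apply the power series identity with ν = n - s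
  have hD : ∀ q ∈ Finset.range (n - s + 1),
      (Nat.descFactorial n (s+q) : ℝ) = (n.factorial : ℝ) * (((n-s-q).factorial : ℝ))⁻¹ := by
    intro q hq
    rw [Finset.mem_range] at hq
    have hle : s + q ≤ n := by omega
    have hfac : ((n - (s+q)).factorial) * (Nat.descFactorial n (s+q)) = n.factorial :=
      Nat.factorial_mul_descFactorial hle
    have h2 : ((n-s-q).factorial : ℝ) ≠ 0 := Nat.cast_ne_zero.2 (Nat.factorial_ne_zero _)
    have h3 : n - (s+q) = n - s - q := by omega
    rw [h3] at hfac
    field_simp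
    rw [← Nat.cast_mul, mul_comm]
    exact_mod_cast hfac
  have key := inner_key b z hz j (n - s) hj.1
  calc ∑ q ∈ Finset.range (n - s + 1), α j s * P j q * (Nat.descFactorial n (s+q) : ℝ)
      = (n.factorial : ℝ) * (α j s * ∑ q ∈ Finset.range (n - s + 1),
          P j q * (((n-s-q).factorial : ℝ))⁻¹) := by
        rw [Finset.mul_sum, Finset.mul_sum]
        apply Finset.sum_congr rfl
        intro q hq
        rw [hD q hq]
        ring
    _ = (n.factorial : ℝ) * (α j s *
          ∑ t ∈ Finset.range (n - s + 1), ∑ k ∈ Finset.Nat.antidiagonalTuple j t,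
            ((-1 : ℝ) ^ (t + (n - s)) / ∏ i : Fin j, (Nat.factorial (k i) : ℝ)) *
              (((j - 1 : ℕ) : ℝ) ^ ((n - s) - t) / (Nat.factorial ((n - s) - t) : ℝ)) *
              ∏ i : Fin j, z (k i)) := by
        rw [key]
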